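/- Let (G,H) be a CSS pair with k = n − rank(G) − rank(H), let H* be an adapted dual of H, and let K ≥ 0. Then the homological difference at zero error satisfies 0 ≤ ΔF_0(G,H;K) ≤ k·ln 2; that is, Z_0(G;K) ≤ Z_0(H*;K) ≤ 2^k · Z_0(G;K). -/

import Mathlib

open Matrix Filter

/-- Partition function `Z_e(G;K)` of the random-bond Ising model in Wegner's form. -/
noncomputable def Zf {ρ : Type*} [Fintype ρ] [DecidableEq ρ] {n : ℕ}
    (G : Matrix ρ (Fin n) (ZMod 2)) (e : Fin n → ZMod 2) (K : ℝ) : ℝ :=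
  ∑ α : ρ → ZMod 2,
    Real.exp (K * ∑ b : Fin n, (-1 : ℝ) ^ ((e b).val + ((Matrix.vecMul α G) b).val))

/-- `Hs` is an adapted dual of `H`: it stacks `G` on top of `k` extra rows, and its
row space equals `C_H^⊥ = {c | H cᵀ = 0}`. -/
def IsAdaptedDual {rG rH k n : ℕ} (G : Matrix (Fin rG) (Fin n) (ZMod 2))
    (H : Matrix (Fin rH) (Fin n) (ZMod 2))
    (Hs : Matrix (Fin rG ⊕ Fin k) (Fin n) (ZMod 2)) : Prop :=
  (∀ i, Hs (Sum.inl i) = G i) ∧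
  LinearMap.range Hs.vecMulLinear = LinearMap.ker H.mulVecLin

/-- Homological difference `ΔF_e(G,H;K) = ln Z_e(H*;K) − ln Z_e(G;K)`. -/
noncomputable def deltaF {ρ ρ' : Type*} [Fintype ρ] [DecidableEq ρ] [Fintype ρ'] [DecidableEq ρ'] {n : ℕ}
    (G : Matrix ρ (Fin n) (ZMod 2)) (Hs : Matrix ρ' (Fin n) (ZMod 2))
    (e : Fin n → ZMod 2) (K : ℝ) : ℝ :=
  Real.log (Zf Hs e K) - Real.log (Zf G e K)

/-- Disorder average `[X_e]_p = Σ_e p^{|e|}(1−p)^{n−|e|} X_e`. -/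
noncomputable def davg {n : ℕ} (p : ℝ) (X : (Fin n → ZMod 2) → ℝ) : ℝ :=
  ∑ e : Fin n → ZMod 2, p ^ hammingNorm e * (1 - p) ^ (n - hammingNorm e) * X e

/-- Average success probability of maximum-likelihood decoding. -/
noncomputable def Psucc {ρ ρ' : Type*} [Fintype ρ] [DecidableEq ρ] [Fintype ρ'] [DecidableEq ρ'] {n : ℕ}
    (G : Matrix ρ (Fin n) (ZMod 2)) (Hs : Matrix ρ' (Fin n) (ZMod 2))
    (K p : ℝ) : ℝ :=
  davg p (fun e => Zf G e K / Zf Hs e K)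

/-- CSS distance `d_G`: minimum Hamming weight of a vector `c` with `H cᵀ = 0`
that is not in the row space of `G`. -/
noncomputable def dCSS {rG rH n : ℕ} (G : Matrix (Fin rG) (Fin n) (ZMod 2))
    (H : Matrix (Fin rH) (Fin n) (ZMod 2)) : ℕ :=
  sInf {w | ∃ c : Fin n → ZMod 2,
    H.mulVec c = 0 ∧ (¬ ∃ α, Matrix.vecMul α G = c) ∧ hammingNorm c = w}



lemma neg_one_pow_val_add (x y : ZMod 2) :
    (-1 : ℝ) ^ ((x + y).val) = (-1 : ℝ) ^ x.val * (-1 : ℝ) ^ y.val := by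
  rw [ZMod.val_add, ← neg_one_pow_eq_pow_mod_two, pow_add]

lemma neg_one_pow_le_one (m : ℕ) : (-1 : ℝ) ^ m ≤ 1 := by
  rcases Nat.even_or_odd m with h | h
  · rw [h.neg_one_pow]
  · rw [h.neg_one_pow]; norm_num

lemma exp_K_neg_one_pow (K : ℝ) (z : ZMod 2) :
    Real.exp (K * (-1 : ℝ) ^ z.val) = Real.cosh K + (-1 : ℝ) ^ z.val * Real.sinh K := by
  have hcases : ∀ w : ZMod 2, w = 0 ∨ w = 1 := by decide
  rcases hcases z with h | h <;> subst h
  · simp [← Real.cosh_add_sinh]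
  · simp only [ZMod.val_one, pow_one, mul_neg, mul_one, neg_one_mul]
    rw [← Real.cosh_sub_sinh]
    ring_nf



lemma neg_one_pow_val_sum {ι : Type*} (u : Finset ι) (f : ι → ZMod 2) :
    (-1 : ℝ) ^ ((∑ b ∈ u, f b).val) = ∏ b ∈ u, (-1 : ℝ) ^ (f b).val := by
  induction u using Finset.cons_induction with
  | empty => simp
  | cons a s ha ih => rw [Finset.sum_cons, Finset.prod_cons, neg_one_pow_val_add, ih]

lemma Zf_expand {ρ : Type*} [Fintype ρ] [DecidableEq ρ] {n : ℕ}
    (G : Matrix ρ (Fin n) (ZMod 2)) (e : Fin n → ZMod 2) (K : ℝ) :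
    Zf G e K = ∑ t : Finset (Fin n),
      (Real.cosh K) ^ t.card * (Real.sinh K) ^ (Finset.univ \ t).card *
        ((-1 : ℝ) ^ ((∑ b ∈ Finset.univ \ t, e b).val) *
          ∑ α : ρ → ZMod 2, (-1 : ℝ) ^ ((∑ b ∈ Finset.univ \ t, (vecMul α G) b).val)) := by
  have step1 : ∀ α : ρ → ZMod 2,
      Real.exp (K * ∑ b : Fin n, (-1 : ℝ) ^ ((e b).val + ((vecMul α G) b).val))
        = ∑ t ∈ (Finset.univ : Finset (Fin n)).powerset,
            (Real.cosh K) ^ t.card * (Real.sinh K) ^ (Finset.univ \ t).card *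
              ((-1 : ℝ) ^ ((∑ b ∈ Finset.univ \ t, e b).val) *
                (-1 : ℝ) ^ ((∑ b ∈ Finset.univ \ t, (vecMul α G) b).val)) := by
    intro α
    rw [Finset.mul_sum, Real.exp_sum]
    have key : ∀ b : Fin n,
        Real.exp (K * (-1 : ℝ) ^ ((e b).val + ((vecMul α G) b).val))
          = Real.cosh K + (-1 : ℝ) ^ ((e b + (vecMul α G) b).val) * Real.sinh K := by
      intro b
      rw [show ((-1 : ℝ) ^ ((e b).val + ((vecMul α G) b).val))
            = (-1 : ℝ) ^ ((e b + (vecMul α G) b).val) by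
          rw [neg_one_pow_val_add, pow_add]]
      exact exp_K_neg_one_pow K _
    simp only [key]
    rw [Finset.prod_add]
    refine Finset.sum_congr rfl fun t _ => ?_
    rw [Finset.prod_const, Finset.prod_mul_distrib, Finset.prod_const,
        ← neg_one_pow_val_sum, Finset.sum_add_distrib, neg_one_pow_val_add]
    ring
  unfold Zf
  simp only [step1, Finset.powerset_univ]
  rw [Finset.sum_comm]
  refine Finset.sum_congr rfl fun t _ => ?_
  rw [← Finset.mul_sum, ← Finset.mul_sum]

lemma charsum_nonneg {ρ : Type*} [Fintype ρ] [DecidableEq ρ]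
    (φ : (ρ → ZMod 2) → ZMod 2)
    (hφ : ∀ x y, φ (x + y) = φ x + φ y) :
    0 ≤ ∑ α : ρ → ZMod 2, (-1 : ℝ) ^ (φ α).val := by
  by_cases h : ∃ α₀, φ α₀ = 1
  · obtain ⟨α₀, h0⟩ := h
    have hz : ∀ z : ZMod 2, (-1 : ℝ) ^ ((z + 1).val) = -(-1 : ℝ) ^ z.val := by
      intro z; rw [neg_one_pow_val_add]; simp [ZMod.val_one]
    have key : (∑ α : ρ → ZMod 2, (-1 : ℝ) ^ (φ α).val)
        = - ∑ α : ρ → ZMod 2, (-1 : ℝ) ^ (φ α).val := by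
      rw [← Finset.sum_neg_distrib]
      exact Fintype.sum_bijective (· + α₀) (Equiv.addRight α₀).bijective _ _
        (fun α => by rw [hφ, h0, hz, neg_neg])
    linarith
  · push_neg at h
    have hz : ∀ z : ZMod 2, z ≠ 1 → z = 0 := by decide
    have h0 : ∀ α : ρ → ZMod 2, φ α = 0 := fun α => hz _ (h α)
    simp [h0]

lemma Zf_le_Zf_zero {ρ : Type*} [Fintype ρ] [DecidableEq ρ] {n : ℕ}
    (G : Matrix ρ (Fin n) (ZMod 2)) (e : Fin n → ZMod 2) {K : ℝ} (hK : 0 ≤ K) :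
    Zf G e K ≤ Zf G 0 K := by
  rw [Zf_expand G e K, Zf_expand G 0 K]
  refine Finset.sum_le_sum fun t _ => ?_
  have hT : 0 ≤ ∑ α : ρ → ZMod 2,
      (-1 : ℝ) ^ ((∑ b ∈ Finset.univ \ t, (vecMul α G) b).val) := by
    refine charsum_nonneg (fun α => ∑ b ∈ Finset.univ \ t, (vecMul α G) b) ?_
    intro x y
    simp [Matrix.add_vecMul, Finset.sum_add_distrib]
  have hc : (0 : ℝ) ≤ (Real.cosh K) ^ t.card * (Real.sinh K) ^ (Finset.univ \ t).card :=
    mul_nonneg (pow_nonneg (Real.cosh_pos K).le _) (pow_nonneg (Real.sinh_nonneg_iff.2 hK) _)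
  have hε : (-1 : ℝ) ^ ((∑ b ∈ Finset.univ \ t, (0 : Fin n → ZMod 2) b).val) = 1 := by
    simp
  rw [hε, one_mul]
  refine mul_le_mul_of_nonneg_left ?_ hc
  calc (-1 : ℝ) ^ ((∑ b ∈ Finset.univ \ t, e b).val) *
        (∑ α : ρ → ZMod 2, (-1 : ℝ) ^ ((∑ b ∈ Finset.univ \ t, (vecMul α G) b).val))
      ≤ 1 * ∑ α : ρ → ZMod 2, (-1 : ℝ) ^ ((∑ b ∈ Finset.univ \ t, (vecMul α G) b).val) :=
        mul_le_mul_of_nonneg_right (neg_one_pow_le_one _) hT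
    _ = _ := one_mul _

lemma Zf_pos {ρ : Type*} [Fintype ρ] [DecidableEq ρ] {n : ℕ}
    (G : Matrix ρ (Fin n) (ZMod 2)) (e : Fin n → ZMod 2) (K : ℝ) :
    0 < Zf G e K :=
  Finset.sum_pos (fun _ _ => Real.exp_pos _) Finset.univ_nonempty

lemma Zf_stack {rG k n : ℕ} (G : Matrix (Fin rG) (Fin n) (ZMod 2))
    (Hs : Matrix (Fin rG ⊕ Fin k) (Fin n) (ZMod 2))
    (htop : ∀ i, Hs (Sum.inl i) = G i) (K : ℝ) :
    Zf Hs 0 K = ∑ γ : Fin k → ZMod 2,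
      Zf G (vecMul γ (Matrix.of fun j b => Hs (Sum.inr j) b)) K := by
  unfold Zf
  rw [← (Equiv.sumArrowEquivProdArrow (Fin rG) (Fin k) (ZMod 2)).symm.sum_comp
    (fun β => Real.exp (K * ∑ b : Fin n,
      (-1 : ℝ) ^ (((0 : Fin n → ZMod 2) b).val + ((vecMul β Hs) b).val)))]
  rw [Fintype.sum_prod_type, Finset.sum_comm]
  refine Finset.sum_congr rfl fun γ _ => Finset.sum_congr rfl fun α _ => ?_
  congr 1
  congr 1
  refine Finset.sum_congr rfl fun b _ => ?_
  have hsplit : vecMul ((Equiv.sumArrowEquivProdArrow (Fin rG) (Fin k) (ZMod 2)).symm (α, γ)) Hs b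
      = vecMul α G b + vecMul γ (Matrix.of fun j b => Hs (Sum.inr j) b) b := by
    simp [Matrix.vecMul, dotProduct, Fintype.sum_sum_type,
      Equiv.sumArrowEquivProdArrow, htop]
  rw [Pi.zero_apply, ZMod.val_zero, Nat.zero_add, hsplit, neg_one_pow_val_add,
    ← pow_add, Nat.add_comm]



set_option maxHeartbeats 1600000 in
/-- `0 ≤ ΔF_0(G,H;K) ≤ k ln 2`, i.e. `Z_0(G;K) ≤ Z_0(H*;K) ≤ 2^k Z_0(G;K)`. -/
theorem stmt2 {rG rH k n : ℕ} (G : Matrix (Fin rG) (Fin n) (ZMod 2))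
    (H : Matrix (Fin rH) (Fin n) (ZMod 2)) (hGH : G * Hᵀ = 0)
    (hk : k = n - G.rank - H.rank)
    (Hs : Matrix (Fin rG ⊕ Fin k) (Fin n) (ZMod 2))
    (hHs : IsAdaptedDual G H Hs) (K : ℝ) (hK : 0 ≤ K) :
    (0 ≤ deltaF G Hs 0 K ∧ deltaF G Hs 0 K ≤ k * Real.log 2) ∧
      (Zf G 0 K ≤ Zf Hs 0 K ∧ Zf Hs 0 K ≤ 2 ^ k * Zf G 0 K) := by
  obtain ⟨htop, -⟩ := hHs
  have hdecomp := Zf_stack G Hs htop K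
  have hZG := Zf_pos G 0 K
  have hZHs := Zf_pos Hs 0 K
  have h1 : Zf G 0 K ≤ Zf Hs 0 K := by
    rw [hdecomp]
    have h0 : Zf G (vecMul (0 : Fin k → ZMod 2)
        (Matrix.of fun j b => Hs (Sum.inr j) b)) K = Zf G 0 K := by
      rw [Matrix.zero_vecMul]
    rw [← h0]
    exact Finset.single_le_sum
      (f := fun γ => Zf G (vecMul γ (Matrix.of fun j b => Hs (Sum.inr j) b)) K)
      (fun γ _ => (Zf_pos G _ K).le) (Finset.mem_univ 0)
  have h2 : Zf Hs 0 K ≤ 2 ^ k * Zf G 0 K := by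
    rw [hdecomp]
    have hle : ∑ γ : Fin k → ZMod 2,
          Zf G (vecMul γ (Matrix.of fun j b => Hs (Sum.inr j) b)) K
        ≤ ∑ _γ : Fin k → ZMod 2, Zf G 0 K :=
      Finset.sum_le_sum
        (f := fun γ => Zf G (vecMul γ (Matrix.of fun j b => Hs (Sum.inr j) b)) K)
        (g := fun _ => Zf G 0 K) (fun γ _ => Zf_le_Zf_zero G _ hK)
    have hcard : (∑ _γ : Fin k → ZMod 2, Zf G 0 K) = 2 ^ k * Zf G 0 K := by
      rw [Finset.sum_const, Finset.card_univ]
      simp [Fintype.card_fun, ZMod.card, nsmul_eq_mul]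
    linarith
  have hΔ1 : 0 ≤ deltaF G Hs 0 K := sub_nonneg.2 (Real.log_le_log hZG h1)
  have hΔ2 : deltaF G Hs 0 K ≤ k * Real.log 2 := by
    unfold deltaF
    have hlog : Real.log (Zf Hs 0 K) ≤ Real.log (2 ^ k * Zf G 0 K) :=
      Real.log_le_log hZHs h2
    rw [Real.log_mul (by positivity) hZG.ne', Real.log_pow] at hlog
    push_cast at hlog ⊢
    linarith
  exact ⟨⟨hΔ1, hΔ2⟩, h1, h2⟩
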